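/- There is an absolute constant C such that for every integer k ≥ 1 and every k-degenerate finite simple graph G on n ≥ 4 vertices, the separation dimension of G satisfies π(G) ≤ C · k · log log n. -/

import Mathlib

/-- A family of linear orders (given as injective rank functions into `ℕ`) of the
vertex set of `G` is *pairwise suitable* for `G` if every two disjoint edges are
separated by some order in the family. -/
def SepFamily {V : Type*} (G : SimpleGraph V) {m : ℕ} (F : Fin m → V → ℕ) : Prop :=
  (∀ i, Function.Injective (F i)) ∧
  ∀ a b c d : V, G.Adj a b → G.Adj c d → a ≠ c → a ≠ d → b ≠ c → b ≠ d →
    ∃ i, (F i a < F i c ∧ F i a < F i d ∧ F i b < F i c ∧ F i b < F i d) ∨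
         (F i c < F i a ∧ F i d < F i a ∧ F i c < F i b ∧ F i d < F i b)

/-- The separation dimension of `G`: the minimum cardinality of a pairwise suitable
family of linear orders of `V(G)`. -/
noncomputable def sepDim {V : Type*} (G : SimpleGraph V) : ℕ :=
  sInf {m : ℕ | ∃ F : Fin m → V → ℕ, SepFamily G F}

/-- `G` is `k`-degenerate: the vertices can be enumerated so that every vertex is
succeeded by at most `k` of its neighbours. -/
def Degenerate {V : Type*} (G : SimpleGraph V) (k : ℕ) : Prop :=
  ∃ ord : V → ℕ, Function.Injective ord ∧
    ∀ v : V, Nat.card {u : V // G.Adj v u ∧ ord v < ord u} ≤ k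


namespace SepDimProof

/-- value of a bit-function on `L` bits -/
def valAux : ℕ → (ℕ → Bool) → ℕ
  | 0, _ => 0
  | (L+1), f => (cond (f 0) 1 0) + 2 * valAux L (fun q => f (q+1))

lemma valAux_lt (L : ℕ) (f : ℕ → Bool) : valAux L f < 2^L := by
  induction L generalizing f with
  | zero => simp [valAux]
  | succ L ih =>
    have h := ih (fun q => f (q+1))
    have : (cond (f 0) 1 0) ≤ 1 := by cases f 0 <;> simp
    simp only [valAux, pow_succ]
    omega

lemma valAux_testBit (L q : ℕ) (f : ℕ → Bool) (h : q < L) :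
    (valAux L f).testBit q = f q := by
  induction L generalizing f q with
  | zero => omega
  | succ L ih =>
    cases q with
    | zero =>
      rw [Nat.testBit_zero]
      show decide (((cond (f 0) 1 0) + 2 * valAux L (fun q => f (q+1))) % 2 = 1) = f 0
      rw [Nat.add_mul_mod_self_left]
      cases hf : f 0 <;> simp
    | succ q =>
      rw [Nat.testBit_succ]
      have hdiv : (cond (f 0) 1 0 + 2 * valAux L (fun q => f (q+1))) / 2
          = valAux L (fun q => f (q+1)) := by
        cases f 0 <;> simp <;> omega
      simp only [valAux, hdiv]
      exact ih q (fun r => f (r+1)) (by omega)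

/-- counting bound for a single constraint -/
lemma bad_single_card (L : ℕ) (hL : 6 ≤ L) (p : Fin 6 → Fin L) (γ : Fin L → Bool) :
    (Finset.univ.filter (fun f : Fin L → Bool => ∃ m, f (p m) ≠ γ (p m))).card
      ≤ 63 * 2^(L-6) := by
  classical
  have h2L : (2:ℕ)^L ≤ 64 * 2^(L-6) := by
    have h6 : L - 6 + 6 = L := by omega
    have e1 : (2:ℕ)^L = 2^(L-6) * 2^6 := by rw [← pow_add, h6]
    have e2 : (2:ℕ)^6 = 64 := by norm_num
    omega
  have he3 : 64 * 2^(L-6) - 2^(L-6) = 63 * 2^(L-6) := by omega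
  have hgood : (Finset.univ.filter
      (fun f : Fin L → Bool => ¬ ∃ m, f (p m) ≠ γ (p m))).card ≥ 2^(L-6) := by
    set P : Finset (Fin L) := Finset.image p Finset.univ with hP
    have hPcard : P.card ≤ 6 := le_trans (Finset.card_image_le) (by simp)
    have hPc : ((Finset.univ : Finset (Fin L)) \ P).card = L - P.card := by
      rw [Finset.card_sdiff_of_subset (Finset.subset_univ _), Finset.card_univ, Fintype.card_fin]
    have hstep1 : (2:ℕ)^(L-6) ≤ 2^(((Finset.univ : Finset (Fin L)) \ P).card) := by
      apply Nat.pow_le_pow_right (by norm_num)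
      omega
    let ι : ((Finset.univ \ P : Finset (Fin L)) → Bool) → (Fin L → Bool) :=
      fun g q => if hq : q ∈ Finset.univ \ P then g ⟨q, hq⟩ else γ q
    have hιmem : ∀ g, ι g ∈ Finset.univ.filter
        (fun f : Fin L → Bool => ¬ ∃ m, f (p m) ≠ γ (p m)) := by
      intro g
      refine Finset.mem_filter.mpr ⟨Finset.mem_univ _, ?_⟩
      push_neg
      intro m
      have hpm : p m ∈ P := Finset.mem_image.mpr ⟨m, Finset.mem_univ _, rfl⟩
      have hnm : (p m) ∉ Finset.univ \ P := by simp [hpm]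
      simp only [ι, dif_neg hnm]
    have hιinj : Function.Injective ι := by
      intro g g' hgg
      funext q
      have hq2 : (q : Fin L) ∉ P := (Finset.mem_sdiff.mp q.2).2
      simpa [ι, hq2] using congrFun hgg (q : Fin L)
    have hstep2 : Fintype.card ((Finset.univ \ P : Finset (Fin L)) → Bool)
        = 2^(((Finset.univ : Finset (Fin L)) \ P).card) := by
      rw [Fintype.card_fun, Fintype.card_bool, Fintype.card_coe]
    have hstep3 : (Finset.univ : Finset ((Finset.univ \ P : Finset (Fin L)) → Bool)).card
        ≤ (Finset.univ.filter (fun f : Fin L → Bool => ¬ ∃ m, f (p m) ≠ γ (p m))).card :=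
      Finset.card_le_card_of_injOn ι (fun g _ => hιmem g) hιinj.injOn
    rw [Finset.card_univ, hstep2] at hstep3
    exact le_trans hstep1 hstep3
  have hcard_univ : (Finset.univ : Finset (Fin L → Bool)).card = 2^L := by
    rw [Finset.card_univ, Fintype.card_fun, Fintype.card_bool, Fintype.card_fin]
  have hsub : (Finset.univ.filter (fun f : Fin L → Bool => ∃ m, f (p m) ≠ γ (p m)))
      ⊆ Finset.univ \ (Finset.univ.filter
        (fun f : Fin L → Bool => ¬ ∃ m, f (p m) ≠ γ (p m))) := by
    intro f hf
    rw [Finset.mem_filter] at hf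
    rw [Finset.mem_sdiff, Finset.mem_filter]
    exact ⟨Finset.mem_univ _, fun hc => hc.2 hf.2⟩
  have h1 := Finset.card_le_card hsub
  rw [Finset.card_sdiff_of_subset (Finset.filter_subset _ _), hcard_univ] at h1
  refine le_trans h1 (le_trans (tsub_le_tsub h2L hgood) (le_of_eq he3))

/-- the counting argument: existence of a small 6-wise universal family of masks -/
lemma univ_exists (L s : ℕ) (hL : 6 ≤ L)
    (h : 64 * L^6 * 63^s < 64^s) :
    ∃ M : Fin s → Fin L → Bool,
      ∀ (γ : Fin L → Bool) (p : Fin 6 → Fin L), ∃ j, ∀ m, M j (p m) = γ (p m) := by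
  classical
  have hsplit : (2:ℕ)^L = 64 * 2^(L-6) := by
    have h6 : L - 6 + 6 = L := by omega
    have e1 : (2:ℕ)^L = 2^(L-6) * 2^6 := by rw [← pow_add, h6]
    have e2 : (2:ℕ)^6 = 64 := by norm_num
    omega
  by_contra hcon
  push_neg at hcon
  set α := Fin s → Fin L → Bool with hα
  let Bad : (Fin 6 → Fin L) → (Fin L → Bool) → Finset α :=
    fun p γ => Fintype.piFinset (fun _ : Fin s =>
      Finset.univ.filter (fun f => ∃ m, f (p m) ≠ γ (p m)))
  have hcover : (Finset.univ : Finset α) ⊆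
      Finset.univ.biUnion (fun pb : (Fin 6 → Fin L) × (Fin 6 → Bool) =>
        if hc : ∃ γ : Fin L → Bool, pb.2 = γ ∘ pb.1 then Bad pb.1 hc.choose else ∅) := by
    intro M _
    obtain ⟨γ, p, hM⟩ := hcon M
    have hc : ∃ γ' : Fin L → Bool, ((p, γ ∘ p) : (Fin 6 → Fin L) × (Fin 6 → Bool)).2
        = γ' ∘ ((p, γ ∘ p) : (Fin 6 → Fin L) × (Fin 6 → Bool)).1 := ⟨γ, rfl⟩
    refine Finset.mem_biUnion.mpr ⟨(p, γ ∘ p), Finset.mem_univ _, ?_⟩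
    rw [dif_pos hc]
    refine Fintype.mem_piFinset.mpr (fun j => ?_)
    refine Finset.mem_filter.mpr ⟨Finset.mem_univ _, ?_⟩
    obtain ⟨m, hm⟩ := hM j
    refine ⟨m, ?_⟩
    have := congrFun hc.choose_spec m
    simp only [Function.comp] at this
    rw [← this]
    exact hm
  have hcount : (Finset.univ : Finset α).card ≤ 64 * L^6 * (63 * 2^(L-6))^s := by
    calc (Finset.univ : Finset α).card
        ≤ (Finset.univ.biUnion (fun pb : (Fin 6 → Fin L) × (Fin 6 → Bool) =>
            if hc : ∃ γ : Fin L → Bool, pb.2 = γ ∘ pb.1 then Bad pb.1 hc.choose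
            else ∅)).card := Finset.card_le_card hcover
      _ ≤ ∑ pb : (Fin 6 → Fin L) × (Fin 6 → Bool),
            (if hc : ∃ γ : Fin L → Bool, pb.2 = γ ∘ pb.1 then Bad pb.1 hc.choose
             else ∅).card := Finset.card_biUnion_le
      _ ≤ ∑ _pb : (Fin 6 → Fin L) × (Fin 6 → Bool), (63 * 2^(L-6))^s := by
          apply Finset.sum_le_sum
          intro pb _
          by_cases hc : ∃ γ : Fin L → Bool, pb.2 = γ ∘ pb.1
          · rw [dif_pos hc]
            have hbc : (Bad pb.1 hc.choose).card
                = (Finset.univ.filter (fun f : Fin L → Bool =>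
                    ∃ m, f (pb.1 m) ≠ hc.choose (pb.1 m))).card ^ s := by
              show (Fintype.piFinset _).card = _
              rw [Fintype.card_piFinset]
              simp
            rw [hbc]
            exact Nat.pow_le_pow_left (bad_single_card L hL pb.1 hc.choose) s
          · simp [dif_neg hc]
      _ = (Fintype.card ((Fin 6 → Fin L) × (Fin 6 → Bool))) * (63 * 2^(L-6))^s := by
          rw [Finset.sum_const, Finset.card_univ, smul_eq_mul]
      _ ≤ 64 * L^6 * (63 * 2^(L-6))^s := by
          have hcp : Fintype.card ((Fin 6 → Fin L) × (Fin 6 → Bool)) = L^6 * 64 := by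
            rw [Fintype.card_prod, Fintype.card_fun, Fintype.card_fun]
            norm_num
          rw [hcp, Nat.mul_comm (L^6) 64]
  have hcard : (Finset.univ : Finset α).card = (2^L)^s := by
    rw [Finset.card_univ]
    show Fintype.card (Fin s → Fin L → Bool) = _
    rw [Fintype.card_fun, Fintype.card_fun, Fintype.card_bool, Fintype.card_fin,
      Fintype.card_fin]
  rw [hcard] at hcount
  have hfinal : (64:ℕ)^s * (2^(L-6))^s ≤ 64 * L^6 * 63^s * (2^(L-6))^s := by
    calc (64:ℕ)^s * (2^(L-6))^s = (64 * 2^(L-6))^s := (mul_pow _ _ _).symm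
      _ = ((2:ℕ)^L)^s := by rw [hsplit]
      _ ≤ 64 * L^6 * (63 * 2^(L-6))^s := hcount
      _ = 64 * L^6 * (63^s * (2^(L-6))^s) := by rw [mul_pow]
      _ = 64 * L^6 * 63^s * (2^(L-6))^s := by ring
  have hposp : 0 < ((2:ℕ)^(L-6))^s := by positivity
  have hle := Nat.le_of_mul_le_mul_right hfinal hposp
  exact absurd hle (not_le.mpr h)

/-- comparison of xor'd values via the top differing bit -/
lemma xor_lt_xor (x y N : ℕ) (hxy : x ≠ y)
    (hN : N.testBit (Nat.log 2 (x ^^^ y)) = !(y.testBit (Nat.log 2 (x ^^^ y)))) :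
    x ^^^ N < y ^^^ N := by
  have hd0 : x ^^^ y ≠ 0 := fun h => hxy (xor_eq_zero_iff.mp h)
  obtain ⟨q, hq⟩ : ∃ q, q = Nat.log 2 (x ^^^ y) := ⟨_, rfl⟩
  rw [← hq] at hN
  have h1 : 2^q ≤ x ^^^ y := hq ▸ Nat.pow_log_le_self 2 hd0
  have h2 : x ^^^ y < 2^(q+1) := by
    rw [hq]; exact Nat.lt_pow_succ_log_self (by norm_num) _
  have hdq : (x ^^^ y).testBit q = true := by
    rw [Nat.testBit_eq_decide_div_mod_eq]
    have h2' : x ^^^ y < 2 * 2^q := by rw [pow_succ] at h2; omega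
    have hdiv : (x ^^^ y) / 2^q = 1 := Nat.div_eq_of_lt_le (by omega) (by omega)
    simp [hdiv]
  have hhigh : ∀ r, q < r → (x ^^^ y).testBit r = false := by
    intro r hr
    apply Nat.testBit_lt_two_pow
    exact lt_of_lt_of_le h2 (Nat.pow_le_pow_right (by norm_num) (by omega))
  have hxyq : x.testBit q = !(y.testBit q) := by
    have h3 := Nat.testBit_xor x y q
    rw [hdq] at h3
    cases hyy : y.testBit q <;> cases hxx : x.testBit q <;>
      rw [hyy, hxx] at h3 <;> revert h3 <;> decide
  apply Nat.lt_of_testBit q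
  · rw [Nat.testBit_xor, hxyq, hN]; cases y.testBit q <;> rfl
  · rw [Nat.testBit_xor, hN]; cases y.testBit q <;> rfl
  · intro r hr
    have h4 := Nat.testBit_xor x y r
    rw [hhigh r hr] at h4
    have hxr : x.testBit r = y.testBit r := by
      cases hyy : y.testBit r <;> cases hxx : x.testBit r <;>
        rw [hyy, hxx] at h4 <;> revert h4 <;> decide
    rw [Nat.testBit_xor, Nat.testBit_xor, hxr]

end SepDimProof

namespace SepDimProof

lemma sub_tie_aux {nn a c : ℕ} (hc : c < nn) (h : a < c) : nn - 1 - c < nn - 1 - a := by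
  omega

lemma sub_inj_aux {nn a b : ℕ} (ha : a < nn) (hb : b < nn)
    (h : nn - 1 - a = nn - 1 - b) : a = b := by omega

lemma key_lt_aux {x y b : ℕ} (hx : x < b) (hy : y < b) :
    2 * max x y + (if y ≤ x then 1 else 0) < 2 * b := by
  rcases Nat.le_total x y with h | h
  · rw [max_eq_right h]; split <;> omega
  · rw [max_eq_left h]; split <;> omega

lemma split_mod_aux {nn k1 k2 t1 t2 : ℕ} (h1 : t1 < nn) (h2 : t2 < nn)
    (h : k1 * nn + t1 = k2 * nn + t2) : t1 = t2 := by
  have e1 : (k1 * nn + t1) % nn = t1 % nn := by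
    rw [Nat.mul_comm]; exact Nat.mul_add_mod nn k1 t1
  have e2 : (k2 * nn + t2) % nn = t2 % nn := by
    rw [Nat.mul_comm]; exact Nat.mul_add_mod nn k2 t2
  rw [Nat.mod_eq_of_lt h1] at e1
  rw [Nat.mod_eq_of_lt h2] at e2
  rw [h] at e1
  rw [e2] at e1
  exact e1.symm

lemma arith_aux (L l s : ℕ) (hLl : L ≤ 2^l) (hs : s = 45 * (7 + 6*l)) :
    64 * L^6 * 63^s < 64^s := by
  have hbase : (2:ℕ) * 63^45 ≤ 64^45 := by norm_num
  have h1 : (64:ℕ)^s = (64^45)^(7+6*l) := by rw [hs, pow_mul]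
  have h2 : ((2:ℕ) * 63^45)^(7+6*l) ≤ (64^45)^(7+6*l) := Nat.pow_le_pow_left hbase _
  have h3 : ((2:ℕ) * 63^45)^(7+6*l) = 2^(7+6*l) * 63^s := by
    rw [mul_pow, ← pow_mul, hs]
  have h4 : (64:ℕ) * L^6 * 63^s < 2^(7+6*l) * 63^s := by
    refine (Nat.mul_lt_mul_right (by positivity : 0 < 63^s)).mpr ?_
    have hL6 : L^6 ≤ (2^l)^6 := Nat.pow_le_pow_left hLl 6
    have e : (2:ℕ)^(7+6*l) = 128 * (2^l)^6 := by
      rw [pow_add, ← pow_mul, mul_comm 6 l, pow_mul]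
      norm_num
    rw [e]
    have hpos : 0 < (2:ℕ)^l := Nat.pow_pos (by norm_num)
    have : 64 * L^6 ≤ 64 * (2^l)^6 := Nat.mul_le_mul_left 64 hL6
    have h128 : 64 * (2^l)^6 < 128 * (2^l)^6 := by
      refine (Nat.mul_lt_mul_right (by positivity : 0 < ((2:ℕ)^l)^6)).mpr ?_
      norm_num
    omega
  calc 64 * L^6 * 63^s < 2^(7+6*l) * 63^s := h4
    _ = ((2:ℕ) * 63^45)^(7+6*l) := h3.symm
    _ ≤ (64^45)^(7+6*l) := h2
    _ = 64^s := h1.symm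

end SepDimProof


/-- There is an absolute constant `C` such that every `k`-degenerate graph (`k ≥ 1`)
on `n ≥ 4` vertices has separation dimension at most `C · k · log log n`
(logarithms to base 2). -/
theorem stmt0 :
    ∃ C : ℝ, 0 < C ∧
      ∀ (k : ℕ), 1 ≤ k →
      ∀ (V : Type) [Fintype V], ∀ (G : SimpleGraph V),
        4 ≤ Fintype.card V → Degenerate G k →
        (sepDim G : ℝ) ≤ C * k * Real.logb 2 (Real.logb 2 (Fintype.card V)) := by
  classical
  refine ⟨4000, by norm_num, ?_⟩
  intro k hk V _ G hn4 hdeg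
  obtain ⟨ord, hord_inj, hord⟩ := hdeg
  set n := Fintype.card V with hn_def
  have hnpos : 0 < n := by omega
  -- ===== neighbour selector =====
  obtain ⟨nbr, hnbr1, hnbr2⟩ : ∃ nbr : Fin k → V → V,
      (∀ i v, nbr i v ≠ v → G.Adj v (nbr i v) ∧ ord v < ord (nbr i v)) ∧
      (∀ v u, G.Adj v u → ord v < ord u → ∃ i, nbr i v = u) := by
    have hcard : ∀ v : V, Fintype.card {u : V // G.Adj v u ∧ ord v < ord u} ≤ k := by
      intro v
      have h := hord v
      rwa [Nat.card_eq_fintype_card] at h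
    have hemb : ∀ v : V, Nonempty ({u : V // G.Adj v u ∧ ord v < ord u} ↪ Fin k) := by
      intro v
      exact Function.Embedding.nonempty_of_card_le
        (le_trans (hcard v) (le_of_eq (Fintype.card_fin k).symm))
    have e : ∀ v : V, {u : V // G.Adj v u ∧ ord v < ord u} ↪ Fin k :=
      fun v => (hemb v).some
    refine ⟨fun i v => if h : ∃ u : {u : V // G.Adj v u ∧ ord v < ord u}, e v u = i
      then (h.choose : V) else v, ?_, ?_⟩
    · intro i v hne
      by_cases h : ∃ u : {u : V // G.Adj v u ∧ ord v < ord u}, e v u = i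
      · simp only [dif_pos h] at hne ⊢
        exact h.choose.2
      · simp only [dif_neg h] at hne
        exact absurd rfl hne
    · intro v u hadj hlt
      refine ⟨e v ⟨u, hadj, hlt⟩, ?_⟩
      have h : ∃ w : {u : V // G.Adj v u ∧ ord v < ord u}, e v w = e v ⟨u, hadj, hlt⟩ :=
        ⟨⟨u, hadj, hlt⟩, rfl⟩
      simp only [dif_pos h]
      have heq : h.choose = ⟨u, hadj, hlt⟩ := (e v).injective h.choose_spec
      rw [heq]
  -- ===== encoding =====
  set enc : V → ℕ := fun v => ((Fintype.equivFin V) v : ℕ) with henc_def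
  have henc_inj : Function.Injective enc := by
    intro a b h
    exact (Fintype.equivFin V).injective (Fin.val_injective h)
  have henc_lt : ∀ v, enc v < n := fun v => ((Fintype.equivFin V) v).2
  set L0 := Nat.clog 2 n with hL0_def
  set L := max L0 6 with hL_def
  have hL6 : 6 ≤ L := le_max_right _ _
  have hnL : n ≤ 2^L := le_trans (Nat.le_pow_clog (by norm_num) n)
    (Nat.pow_le_pow_right (by norm_num) (le_max_left _ _))
  set l := Nat.clog 2 L with hl_def
  set s := 45 * (7 + 6 * l) with hs_def
  have harith : 64 * L^6 * 63^s < 64^s :=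
    SepDimProof.arith_aux L l s (Nat.le_pow_clog (by norm_num) L) hs_def
  obtain ⟨M, hM⟩ := SepDimProof.univ_exists L s hL6 harith
  set NN : Fin s → ℕ := fun j =>
    SepDimProof.valAux L (fun q => if h : q < L then M j ⟨q, h⟩ else false) with hNN_def
  have hNN_bit : ∀ (j : Fin s) (q : ℕ) (h : q < L), (NN j).testBit q = M j ⟨q, h⟩ := by
    intro j q h
    show (SepDimProof.valAux L _).testBit q = _
    rw [SepDimProof.valAux_testBit L q _ h, dif_pos h]
  have huniv : ∀ (y : ℕ) (p : Fin 6 → ℕ), (∀ m, p m < L) →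
      ∃ j, ∀ m, (NN j).testBit (p m) = y.testBit (p m) := by
    intro y p hp
    obtain ⟨j, hj⟩ := hM (fun q : Fin L => y.testBit q) (fun m => ⟨p m, hp m⟩)
    exact ⟨j, fun m => by rw [hNN_bit j (p m) (hp m)]; exact hj m⟩
  -- ===== orders =====
  set σ : Fin s → V → ℕ := fun j v => enc v ^^^ NN j with hσ_def
  have hσ_inj : ∀ j, Function.Injective (σ j) := by
    intro j a b h
    apply henc_inj
    have : enc a ^^^ NN j ^^^ NN j = enc b ^^^ NN j ^^^ NN j := by
      show σ j a ^^^ NN j = σ j b ^^^ NN j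
      rw [h]
    simpa [Nat.xor_assoc, Nat.xor_self, Nat.xor_zero] using this
  set τ : Fin 2 → V → ℕ := fun ε v => if ε = 0 then enc v else n - 1 - enc v with hτ_def
  have hτ_lt : ∀ ε v, τ ε v < n := by
    intro ε v
    show (if ε = 0 then enc v else n - 1 - enc v) < n
    split
    · exact henc_lt v
    · have := henc_lt v; omega
  have hτ_inj : ∀ ε, Function.Injective (τ ε) := by
    intro ε a b h
    by_cases hε : ε = 0
    · apply henc_inj
      simpa [hτ_def, hε] using h
    · apply henc_inj
      simp only [hτ_def, if_neg hε] at h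
      exact SepDimProof.sub_inj_aux (henc_lt a) (henc_lt b) h
  set Key : Fin k → Fin s → V → ℕ := fun i j v =>
    2 * max (σ j v) (σ j (nbr i v)) + (if σ j (nbr i v) ≤ σ j v then 1 else 0) with hKey_def
  set Fam : Fin k → Fin s → Fin 2 → V → ℕ := fun i j ε v => Key i j v * n + τ ε v with hFam_def
  have hFam_mono : ∀ i j ε v w, Key i j v < Key i j w → Fam i j ε v < Fam i j ε w := by
    intro i j ε v w h
    show Key i j v * n + τ ε v < Key i j w * n + τ ε w
    have h1 : Key i j v * n + τ ε v < (Key i j v + 1) * n := by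
      calc Key i j v * n + τ ε v < Key i j v * n + n := Nat.add_lt_add_left (hτ_lt ε v) _
        _ = (Key i j v + 1) * n := by ring
    have h2 : (Key i j v + 1) * n ≤ Key i j w * n := Nat.mul_le_mul_right n h
    exact lt_of_lt_of_le h1 (le_trans h2 (Nat.le_add_right _ _))
  have hFam_inj : ∀ i j ε, Function.Injective (Fam i j ε) := by
    intro i j ε v w h
    apply hτ_inj ε
    exact SepDimProof.split_mod_aux (hτ_lt ε v) (hτ_lt ε w) h
  -- ===== mask selection =====
  have hmask : ∀ (y t1 t2 t3 t4 t5 t6 : V), ∃ j : Fin s,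
      (t1 ≠ y → σ j t1 < σ j y) ∧ (t2 ≠ y → σ j t2 < σ j y) ∧
      (t3 ≠ y → σ j t3 < σ j y) ∧ (t4 ≠ y → σ j t4 < σ j y) ∧
      (t5 ≠ y → σ j t5 < σ j y) ∧ (t6 ≠ y → σ j t6 < σ j y) := by
    intro y t1 t2 t3 t4 t5 t6
    set tt : Fin 6 → V := fun m =>
      if m.val = 0 then t1 else if m.val = 1 then t2 else if m.val = 2 then t3
      else if m.val = 3 then t4 else if m.val = 4 then t5 else t6 with htt_def
    set p : Fin 6 → ℕ := fun m => Nat.log 2 (enc (tt m) ^^^ enc y) with hp_def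
    have hplt : ∀ m, p m < L := by
      intro m
      show Nat.log 2 (enc (tt m) ^^^ enc y) < L
      by_cases h : enc (tt m) ^^^ enc y = 0
      · rw [h]
        simp only [Nat.log_zero_right]
        omega
      · exact Nat.log_lt_of_lt_pow h
          (Nat.xor_lt_two_pow (lt_of_lt_of_le (henc_lt _) hnL)
            (lt_of_lt_of_le (henc_lt _) hnL))
    obtain ⟨j, hj⟩ := huniv ((2^L - 1) ^^^ enc y) p hplt
    have key : ∀ m : Fin 6, tt m ≠ y → σ j (tt m) < σ j y := by
      intro m hm
      have hne : enc (tt m) ≠ enc y := fun h => hm (henc_inj h)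
      apply SepDimProof.xor_lt_xor (enc (tt m)) (enc y) (NN j) hne
      have hb := hj m
      show (NN j).testBit (p m) = !(enc y).testBit (p m)
      rw [hb, Nat.testBit_xor, Nat.testBit_two_pow_sub_one]
      have hlt := hplt m
      simp [hlt]
    refine ⟨j, ?_, ?_, ?_, ?_, ?_, ?_⟩
    · have := key ⟨0, by norm_num⟩; simpa [htt_def] using this
    · have := key ⟨1, by norm_num⟩; simpa [htt_def] using this
    · have := key ⟨2, by norm_num⟩; simpa [htt_def] using this
    · have := key ⟨3, by norm_num⟩; simpa [htt_def] using this
    · have := key ⟨4, by norm_num⟩; simpa [htt_def] using this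
    · have := key ⟨5, by norm_num⟩; simpa [htt_def] using this
  -- ===== the scheme lemma =====
  have scheme : ∀ (i : Fin k) (A B C D : V), nbr i A = B → A ≠ B → C ≠ B → D ≠ B →
      C ≠ A → D ≠ A → ¬(nbr i C = B ∧ nbr i D = B) →
      ∃ (j : Fin s) (ε : Fin 2),
        Fam i j ε C < Fam i j ε A ∧ Fam i j ε C < Fam i j ε B ∧
        Fam i j ε D < Fam i j ε A ∧ Fam i j ε D < Fam i j ε B := by
    intro i A B C D hAB hABne hCB hDB hCA hDA hno
    obtain ⟨j, hjA, hjC, hjD, hjNB, hjNC, hjND⟩ := hmask B A C D (nbr i B) (nbr i C) (nbr i D)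
    have hA : σ j A < σ j B := hjA hABne
    have hC : σ j C < σ j B := hjC hCB
    have hD : σ j D < σ j B := hjD hDB
    have hNB : σ j (nbr i B) ≤ σ j B := by
      by_cases h : nbr i B = B
      · rw [h]
      · exact le_of_lt (hjNB h)
    -- tie-break choice
    obtain ⟨ε, hεC, hεD⟩ : ∃ ε : Fin 2,
        (nbr i C = B → τ ε C < τ ε A) ∧ (nbr i D = B → τ ε D < τ ε A) := by
      have pick : ∀ X : V, X ≠ A → ∃ ε : Fin 2, τ ε X < τ ε A := by
        intro X hXA
        rcases Nat.lt_or_ge (enc X) (enc A) with h | h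
        · refine ⟨0, ?_⟩
          show (if (0:Fin 2) = 0 then enc X else n - 1 - enc X)
            < (if (0:Fin 2) = 0 then enc A else n - 1 - enc A)
          simpa using h
        · have hlt : enc A < enc X :=
            lt_of_le_of_ne h (fun e => hXA (henc_inj e.symm))
          refine ⟨1, ?_⟩
          show (if (1:Fin 2) = 0 then enc X else n - 1 - enc X)
            < (if (1:Fin 2) = 0 then enc A else n - 1 - enc A)
          have h10 : (1 : Fin 2) ≠ 0 := by decide
          rw [if_neg h10, if_neg h10]
          exact SepDimProof.sub_tie_aux (henc_lt X) hlt
      by_cases hc : nbr i C = B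
      · have hd : nbr i D ≠ B := fun h => hno ⟨hc, h⟩
        obtain ⟨ε, hε⟩ := pick C hCA
        exact ⟨ε, fun _ => hε, fun h => absurd h hd⟩
      · by_cases hdd : nbr i D = B
        · obtain ⟨ε, hε⟩ := pick D hDA
          exact ⟨ε, fun h => absurd h hc, fun _ => hε⟩
        · exact ⟨0, fun h => absurd h hc, fun h => absurd h hdd⟩
    -- key values
    have hKB : Key i j B = 2 * σ j B + 1 := by
      show 2 * max (σ j B) (σ j (nbr i B)) + (if σ j (nbr i B) ≤ σ j B then 1 else 0)
        = 2 * σ j B + 1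
      rw [max_eq_left hNB, if_pos hNB]
    have hKA : Key i j A = 2 * σ j B := by
      show 2 * max (σ j A) (σ j (nbr i A)) + (if σ j (nbr i A) ≤ σ j A then 1 else 0)
        = 2 * σ j B
      rw [hAB, max_eq_right (le_of_lt hA), if_neg (not_le.mpr hA), add_zero]
    have hmain : ∀ X : V, X ≠ B → σ j X < σ j B → (nbr i X ≠ B → σ j (nbr i X) < σ j B) →
        (nbr i X = B → τ ε X < τ ε A) →
        Fam i j ε X < Fam i j ε A ∧ Fam i j ε X < Fam i j ε B := by
      intro X hXB hσX hσNX hτX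
      by_cases hnx : nbr i X = B
      · have hKX : Key i j X = 2 * σ j B := by
          show 2 * max (σ j X) (σ j (nbr i X)) + (if σ j (nbr i X) ≤ σ j X then 1 else 0)
            = 2 * σ j B
          rw [hnx, max_eq_right (le_of_lt hσX), if_neg (not_le.mpr hσX), add_zero]
        constructor
        · show Key i j X * n + τ ε X < Key i j A * n + τ ε A
          rw [hKX, hKA]
          exact Nat.add_lt_add_left (hτX hnx) _
        · apply hFam_mono
          rw [hKX, hKB]
          exact Nat.lt_succ_self _
      · have hKX : Key i j X < Key i j A := by
          rw [hKA]
          show 2 * max (σ j X) (σ j (nbr i X)) + (if σ j (nbr i X) ≤ σ j X then 1 else 0)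
            < 2 * σ j B
          exact SepDimProof.key_lt_aux hσX (hσNX hnx)
        exact ⟨hFam_mono i j ε X A hKX,
          hFam_mono i j ε X B (lt_trans hKX (by rw [hKA, hKB]; exact Nat.lt_succ_self _))⟩
    obtain ⟨h1, h2⟩ := hmain C hCB hC hjNC hεC
    obtain ⟨h3, h4⟩ := hmain D hDB hD hjND hεD
    exact ⟨j, ε, h1, h2, h3, h4⟩
  -- ===== aux: oriented pair separation =====
  have aux : ∀ (a' b' c' d' : V) (i i' : Fin k),
      nbr i a' = b' → nbr i' c' = d' →
      a' ≠ b' → c' ≠ d' → a' ≠ c' → a' ≠ d' → b' ≠ c' → b' ≠ d' →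
      ∃ (ii : Fin k) (j : Fin s) (ε : Fin 2),
        (Fam ii j ε c' < Fam ii j ε a' ∧ Fam ii j ε c' < Fam ii j ε b' ∧
         Fam ii j ε d' < Fam ii j ε a' ∧ Fam ii j ε d' < Fam ii j ε b') ∨
        (Fam ii j ε a' < Fam ii j ε c' ∧ Fam ii j ε a' < Fam ii j ε d' ∧
         Fam ii j ε b' < Fam ii j ε c' ∧ Fam ii j ε b' < Fam ii j ε d') := by
    intro a' b' c' d' i i' h1 h2 hab hcd hac had hbc hbd
    by_cases hboth : nbr i c' = b' ∧ nbr i d' = b'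
    · -- run the scheme on the second edge
      have hordd : ord d' < ord b' := by
        have hne : nbr i d' ≠ d' := by rw [hboth.2]; exact hbd
        have h3 := hnbr1 i d' hne
        rw [hboth.2] at h3
        exact h3.2
      have hnb : nbr i' b' ≠ d' := by
        intro hcon
        have hne : nbr i' b' ≠ b' := by rw [hcon]; exact Ne.symm hbd
        have h3 := hnbr1 i' b' hne
        rw [hcon] at h3
        exact absurd h3.2 (not_lt.mpr (le_of_lt hordd))
      obtain ⟨j, ε, h4⟩ := scheme i' c' d' a' b' h2 hcd had hbd hac hbc
        (fun hcc => hnb hcc.2)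
      exact ⟨i', j, ε, Or.inr h4⟩
    · obtain ⟨j, ε, h4⟩ := scheme i a' b' c' d' h1 hab (Ne.symm hbc) (Ne.symm hbd)
        (Ne.symm hac) (Ne.symm had) hboth
      exact ⟨i, j, ε, Or.inl h4⟩
  -- ===== orientation =====
  have horient : ∀ x y : V, G.Adj x y → ∃ (x' y' : V) (i0 : Fin k),
      ((x' = x ∧ y' = y) ∨ (x' = y ∧ y' = x)) ∧ nbr i0 x' = y' ∧ x' ≠ y' := by
    intro x y hxy
    have hne : ord x ≠ ord y := fun h => hxy.ne (hord_inj h)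
    rcases Nat.lt_or_ge (ord x) (ord y) with h | h
    · obtain ⟨i0, hi0⟩ := hnbr2 x y hxy h
      exact ⟨x, y, i0, Or.inl ⟨rfl, rfl⟩, hi0, hxy.ne⟩
    · have h' : ord y < ord x := lt_of_le_of_ne h (Ne.symm hne)
      obtain ⟨i0, hi0⟩ := hnbr2 y x hxy.symm h'
      exact ⟨y, x, i0, Or.inr ⟨rfl, rfl⟩, hi0, hxy.ne'⟩
  -- ===== the family and membership =====
  set m := k * (s * 2) with hm_def
  set eqv : (Fin k × (Fin s × Fin 2)) ≃ Fin (k * (s * 2)) :=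
    ((Equiv.refl (Fin k)).prodCongr finProdFinEquiv).trans finProdFinEquiv with heqv_def
  set F : Fin (k * (s * 2)) → V → ℕ := fun I v =>
    Fam (eqv.symm I).1 (eqv.symm I).2.1 (eqv.symm I).2.2 v with hF_def
  have hmem : m ∈ {m : ℕ | ∃ F : Fin m → V → ℕ, SepFamily G F} := by
    refine ⟨F, fun I => hFam_inj _ _ _, ?_⟩
    intro a b c d hadjab hadjcd hac had hbc hbd
    obtain ⟨a', b', i, hor1, hnbra, hab'⟩ := horient a b hadjab
    obtain ⟨c', d', i', hor2, hnbrc, hcd'⟩ := horient c d hadjcd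
    have hFeq : ∀ (ii : Fin k) (j : Fin s) (ε : Fin 2) (v : V),
        F (eqv (ii, j, ε)) v = Fam ii j ε v := by
      intro ii j ε v
      show Fam (eqv.symm (eqv (ii, j, ε))).1 _ _ v = _
      rw [Equiv.symm_apply_apply]
    have hclean : ∀ (x1 y1 x2 y2 : V) (ii : Fin k) (j : Fin s) (ε : Fin 2),
        (Fam ii j ε x2 < Fam ii j ε x1 ∧ Fam ii j ε x2 < Fam ii j ε y1 ∧
         Fam ii j ε y2 < Fam ii j ε x1 ∧ Fam ii j ε y2 < Fam ii j ε y1) ∨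
        (Fam ii j ε x1 < Fam ii j ε x2 ∧ Fam ii j ε x1 < Fam ii j ε y2 ∧
         Fam ii j ε y1 < Fam ii j ε x2 ∧ Fam ii j ε y1 < Fam ii j ε y2) →
        (F (eqv (ii, j, ε)) x1 < F (eqv (ii, j, ε)) x2 ∧
         F (eqv (ii, j, ε)) x1 < F (eqv (ii, j, ε)) y2 ∧
         F (eqv (ii, j, ε)) y1 < F (eqv (ii, j, ε)) x2 ∧
         F (eqv (ii, j, ε)) y1 < F (eqv (ii, j, ε)) y2) ∨
        (F (eqv (ii, j, ε)) x2 < F (eqv (ii, j, ε)) x1 ∧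
         F (eqv (ii, j, ε)) y2 < F (eqv (ii, j, ε)) x1 ∧
         F (eqv (ii, j, ε)) x2 < F (eqv (ii, j, ε)) y1 ∧
         F (eqv (ii, j, ε)) y2 < F (eqv (ii, j, ε)) y1) := by
      intro x1 y1 x2 y2 ii j ε hres
      simp only [hFeq]
      rcases hres with ⟨u1, u2, u3, u4⟩ | ⟨u1, u2, u3, u4⟩
      · exact Or.inr ⟨u1, u3, u2, u4⟩
      · exact Or.inl ⟨u1, u2, u3, u4⟩
    rcases hor1 with ⟨e1, e2⟩ | ⟨e1, e2⟩ <;> rcases hor2 with ⟨e3, e4⟩ | ⟨e3, e4⟩ <;>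
      subst e1 <;> subst e2 <;> subst e3 <;> subst e4 <;>
      [skip; skip; skip; skip] <;>
      · obtain ⟨ii, j, ε, hres⟩ := aux a' b' c' d' i i' hnbra hnbrc hab' hcd'
          (by first | exact hac | exact had | exact hbc | exact hbd)
          (by first | exact hac | exact had | exact hbc | exact hbd)
          (by first | exact hac | exact had | exact hbc | exact hbd)
          (by first | exact hac | exact had | exact hbc | exact hbd)
        refine ⟨eqv (ii, j, ε), ?_⟩
        have hgoal := hclean a' b' c' d' ii j ε hres
        rcases hgoal with ⟨u1, u2, u3, u4⟩ | ⟨u1, u2, u3, u4⟩ <;>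
          first
            | exact Or.inl ⟨by assumption, by assumption, by assumption, by assumption⟩
            | exact Or.inr ⟨by assumption, by assumption, by assumption, by assumption⟩
  have hsep_le : sepDim G ≤ m := Nat.sInf_le hmem
  -- ===== numeric bound =====
  have hk1R : (1:ℝ) ≤ (k:ℝ) := by exact_mod_cast hk
  have hknn : (0:ℝ) ≤ (k:ℝ) := by positivity
  have logb_mono : ∀ x y : ℝ, 0 < x → x ≤ y → Real.logb 2 x ≤ Real.logb 2 y := by
    intro x y hx hxy
    exact (Real.logb_le_logb (by norm_num) hx (lt_of_lt_of_le hx hxy)).mpr hxy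
  have logb_pow2 : ∀ t : ℕ, Real.logb 2 ((2:ℝ)^t) = t := by
    intro t
    rw [Real.logb_pow, Real.logb_self_eq_one (by norm_num)]
    ring
  have hn4R : (4:ℝ) ≤ (n:ℝ) := by exact_mod_cast hn4
  have hlgn2 : 2 ≤ Real.logb 2 (n:ℝ) := by
    have h4 : Real.logb 2 ((2:ℝ)^(2:ℕ)) = ((2:ℕ):ℝ) := logb_pow2 2
    have h5 := logb_mono ((2:ℝ)^(2:ℕ)) (n:ℝ)
      (by norm_num) (by rw [show ((2:ℝ)^(2:ℕ)) = 4 by norm_num]; exact hn4R)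
    rw [h4] at h5
    norm_num at h5
    exact h5
  have hlgn_pos : (0:ℝ) < Real.logb 2 (n:ℝ) := by linarith
  have hllb1 : 1 ≤ Real.logb 2 (Real.logb 2 (n:ℝ)) := by
    have h1 := logb_mono 2 (Real.logb 2 (n:ℝ)) (by norm_num) hlgn2
    rw [Real.logb_self_eq_one (by norm_num)] at h1
    exact h1
  have hL0ge2 : 2 ≤ L0 := by
    by_contra hcon
    push_neg at hcon
    have h1 : n ≤ 2^L0 := Nat.le_pow_clog (by norm_num) n
    have h2 : (2:ℕ)^L0 ≤ 2^1 := Nat.pow_le_pow_right (by norm_num) (by omega)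
    norm_num at h2
    omega
  have hL0lt : 2^(L0 - 1) < n := by
    have h := Nat.pow_pred_clog_lt_self (b := 2) (by norm_num) (x := n) (by omega)
    rwa [Nat.pred_eq_sub_one] at h
  have hL0R : (L0:ℝ) ≤ Real.logb 2 (n:ℝ) + 1 := by
    have hcast : ((2:ℝ)^(L0-1 : ℕ)) ≤ (n:ℝ) := by exact_mod_cast le_of_lt hL0lt
    have h3 := logb_mono ((2:ℝ)^(L0-1 : ℕ)) (n:ℝ) (by positivity) hcast
    rw [logb_pow2] at h3
    rw [Nat.cast_sub (by omega : 1 ≤ L0)] at h3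
    push_cast at h3
    linarith
  have hl1 : 1 ≤ l := by
    by_contra hcon
    push_neg at hcon
    have h1 : L ≤ 2^l := Nat.le_pow_clog (by norm_num) L
    have hl0 : l = 0 := by omega
    rw [hl0] at h1
    norm_num at h1
    omega
  have hllt : 2^(l - 1) < L := by
    have h := Nat.pow_pred_clog_lt_self (b := 2) (by norm_num) (x := L) (by omega)
    rwa [Nat.pred_eq_sub_one] at h
  have hLpos : (0:ℝ) < (L:ℝ) := by
    have : 0 < L := by omega
    exact_mod_cast this
  have hlR : (l:ℝ) ≤ Real.logb 2 (L:ℝ) + 1 := by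
    have hcast : ((2:ℝ)^(l-1 : ℕ)) ≤ (L:ℝ) := by exact_mod_cast le_of_lt hllt
    have h3 := logb_mono ((2:ℝ)^(l-1 : ℕ)) (L:ℝ) (by positivity) hcast
    rw [logb_pow2] at h3
    rw [Nat.cast_sub (by omega : 1 ≤ l)] at h3
    push_cast at h3
    linarith
  have hLR : (L:ℝ) ≤ 6 * (L0:ℝ) := by
    have h : L ≤ 6 * L0 := by
      rw [hL_def]
      omega
    exact_mod_cast h
  have hL0pos : (0:ℝ) < (L0:ℝ) := by
    have : 0 < L0 := by omega
    exact_mod_cast this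
  have hlogL : Real.logb 2 (L:ℝ) ≤ 4 + Real.logb 2 (Real.logb 2 (n:ℝ)) := by
    have h1 := logb_mono (L:ℝ) (6*(L0:ℝ)) hLpos hLR
    have h2 : Real.logb 2 (6*(L0:ℝ)) = Real.logb 2 6 + Real.logb 2 (L0:ℝ) :=
      Real.logb_mul (by norm_num) (by positivity)
    have h3 : Real.logb 2 (6:ℝ) ≤ 3 := by
      have h := logb_mono 6 ((2:ℝ)^(3:ℕ)) (by norm_num) (by norm_num)
      rw [logb_pow2] at h
      norm_num at h
      exact h
    have h4 : Real.logb 2 (L0:ℝ) ≤ Real.logb 2 (2 * Real.logb 2 (n:ℝ)) := by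
      apply logb_mono _ _ hL0pos
      linarith
    have h5 : Real.logb 2 (2 * Real.logb 2 (n:ℝ))
        = 1 + Real.logb 2 (Real.logb 2 (n:ℝ)) := by
      rw [Real.logb_mul (by norm_num) (by linarith),
        Real.logb_self_eq_one (by norm_num)]
    linarith
  have hl5 : (l:ℝ) ≤ 5 + Real.logb 2 (Real.logb 2 (n:ℝ)) := by linarith
  have hmR : (m:ℝ) = (k:ℝ) * (45 * (7 + 6*(l:ℝ)) * 2) := by
    rw [hm_def, hs_def]
    push_cast
    ring
  have hmain : (m:ℝ) ≤ 4000 * (k:ℝ) * Real.logb 2 (Real.logb 2 (n:ℝ)) := by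
    rw [hmR]
    nlinarith [mul_le_mul_of_nonneg_left hl5 hknn,
      mul_le_mul_of_nonneg_left hllb1 hknn, hk1R, hllb1]
  calc (sepDim G : ℝ) ≤ (m:ℝ) := by exact_mod_cast hsep_le
    _ ≤ 4000 * (k:ℝ) * Real.logb 2 (Real.logb 2 (n:ℝ)) := hmain
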